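/- (Atomic cut property of derivability in a base) For every base B, finite multisets of atoms P = [p₁, …, pₙ] and S, and atom q, the following are equivalent: (1) P ⨾ S ⊢_B q; (2) for every base X ⊇ B and all finite multisets of atoms T₁, …, Tₙ, if Tᵢ ⊢_X pᵢ for all i = 1, …, n, then T₁ ⨾ … ⨾ Tₙ ⨾ S ⊢_X q. -/

import Mathlib

/-- Formulas of intuitionistic multiplicative linear logic over a
countably infinite set of atoms (here: `ℕ`). -/
inductive MForm : Type where
  | atom : ℕ → MForm
  | tensor : MForm → MForm → MForm
  | unit : MForm
  | limp : MForm → MForm → MForm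
deriving DecidableEq

/-- An atomic rule `(P₁ ▷ p₁, …, Pₙ ▷ pₙ) ⇒ p`: a (possibly empty) finite
set of atomic sequents together with a conclusion atom. -/
structure MRule : Type where
  prems : Finset (Multiset ℕ × ℕ)
  concl : ℕ

/-- A base is a set of atomic rules. -/
abbrev MBase := Set MRule

/-- Derivability in a base `B`: `P ⊢_B p`. -/
inductive MDer (B : MBase) : Multiset ℕ → ℕ → Prop where
  | ref (p : ℕ) : MDer B {p} p
  | app {r : MRule} (hr : r ∈ B) (S : Multiset ℕ × ℕ → Multiset ℕ)
      (h : ∀ pr ∈ r.prems, MDer B (S pr + pr.1) pr.2) :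
      MDer B (r.prems.sum S) r.concl

/-- The resource-indexed support relation `⊩_B^P φ`. -/
def MSupp : MForm → MBase → Multiset ℕ → Prop
  | .atom p, B, P => MDer B P p
  | .tensor φ ψ, B, P => ∀ X : MBase, B ⊆ X → ∀ U : Multiset ℕ, ∀ p : ℕ,
      (∀ Y : MBase, X ⊆ Y → ∀ V : Multiset ℕ,
        (∃ V₁ V₂ : Multiset ℕ, V = V₁ + V₂ ∧ MSupp φ Y V₁ ∧ MSupp ψ Y V₂) →
        MDer Y (U + V) p) →
      MDer X (P + U) p
  | .unit, B, P => ∀ X : MBase, B ⊆ X → ∀ U : Multiset ℕ, ∀ p : ℕ,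
      MDer X U p → MDer X (P + U) p
  | .limp φ ψ, B, P => ∀ X : MBase, B ⊆ X → ∀ U : Multiset ℕ,
      MSupp φ X U → MSupp ψ X (P + U)

/-- Support of a multiset of formulas: `⊩_B^P Γ`, obtained by splitting
the resources `P` among the members of `Γ`. -/
inductive MSuppCtx (B : MBase) : Multiset ℕ → Multiset MForm → Prop where
  | nil : MSuppCtx B 0 0
  | cons {P Q : Multiset ℕ} {φ : MForm} {Γ : Multiset MForm} :
      MSupp φ B P → MSuppCtx B Q Γ → MSuppCtx B (P + Q) (φ ::ₘ Γ)

/-- Support of a sequent: `Γ ⊩_B^P φ` (clause (Inf)). -/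
def MSuppInf (Γ : Multiset MForm) (B : MBase) (P : Multiset ℕ) (φ : MForm) : Prop :=
  ∀ X : MBase, B ⊆ X → ∀ U : Multiset ℕ, MSuppCtx X U Γ → MSupp φ X (P + U)

/-- Validity: `Γ ⊩ φ` iff `Γ ⊩_B^∅ φ` for every base `B`. -/
def MValid (Γ : Multiset MForm) (φ : MForm) : Prop :=
  ∀ B : MBase, MSuppInf Γ B 0 φ

/-- The natural deduction system NIMLL: `Γ ⊢ φ`. -/
inductive NIMLL : Multiset MForm → MForm → Prop where
  | ax (φ : MForm) : NIMLL {φ} φ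
  | limpI {Γ : Multiset MForm} {φ ψ : MForm} :
      NIMLL (φ ::ₘ Γ) ψ → NIMLL Γ (.limp φ ψ)
  | limpE {Γ Δ : Multiset MForm} {φ ψ : MForm} :
      NIMLL Γ (.limp φ ψ) → NIMLL Δ φ → NIMLL (Γ + Δ) ψ
  | unitI : NIMLL 0 .unit
  | unitE {Γ Δ : Multiset MForm} {φ : MForm} :
      NIMLL Γ φ → NIMLL Δ .unit → NIMLL (Γ + Δ) φ
  | tensorI {Γ Δ : Multiset MForm} {φ ψ : MForm} :
      NIMLL Γ φ → NIMLL Δ ψ → NIMLL (Γ + Δ) (.tensor φ ψ)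
  | tensorE {Γ Δ : Multiset MForm} {φ ψ χ : MForm} :
      NIMLL Γ (.tensor φ ψ) → NIMLL (φ ::ₘ ψ ::ₘ Δ) χ → NIMLL (Γ + Δ) χ

lemma MDer.mono {B X : MBase} (hBX : B ⊆ X) {P : Multiset ℕ} {q : ℕ}
    (h : MDer B P q) : MDer X P q := by
  induction h with
  | ref p => exact .ref p
  | app hr Sf h ih => exact .app (hBX hr) Sf ih

lemma MDer.cut {X : MBase} {C : Multiset ℕ} {q : ℕ} (h : MDer X C q) :
    ∀ p P, C = p ::ₘ P → ∀ T, MDer X T p → MDer X (P + T) q := by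
  induction h with
  | ref r =>
    intro p P hC T hT
    have hp : p = r := by
      have : p ∈ ({r} : Multiset ℕ) := hC ▸ Multiset.mem_cons_self p P
      simpa using this
    have hP : P = 0 := by
      subst hp
      have : p ::ₘ P = p ::ₘ (0 : Multiset ℕ) := hC.symm
      exact (Multiset.cons_inj_right p).1 this
    subst hp; subst hP
    simpa using hT
  | @app r hr Sf hprem ih =>
    intro p P hC T hT
    have hpmem : p ∈ r.prems.sum Sf := by rw [hC]; exact Multiset.mem_cons_self p P
    obtain ⟨pr, hpr, hp⟩ := Multiset.mem_sum.1 hpmem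
    classical
    set S' : Multiset ℕ × ℕ → Multiset ℕ :=
      fun x => if x = pr then (Sf pr).erase p + T else Sf x with hS'
    have hprem' : ∀ x ∈ r.prems, MDer X (S' x + x.1) x.2 := by
      intro x hx
      by_cases hxe : x = pr
      · subst hxe
        simp only [hS', if_pos rfl]
        have heq : Sf x + x.1 = p ::ₘ ((Sf x).erase p + x.1) := by
          rw [← Multiset.cons_add, Multiset.cons_erase hp]
        have := ih x hx p ((Sf x).erase p + x.1) heq T hT
        have : MDer X ((Sf x).erase p + x.1 + T) x.2 := this
        convert this using 1
        abel
      · simpa [hS', hxe] using hprem x hx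
    have hres := MDer.app hr S' hprem'
    have hsum : r.prems.sum S' = P + T := by
      have e1 : r.prems.sum S' = (r.prems.erase pr).sum S' + S' pr :=
        (Finset.sum_erase_add _ _ hpr).symm
      have e2 : (r.prems.erase pr).sum S' = (r.prems.erase pr).sum Sf :=
        Finset.sum_congr rfl fun x hx => by simp [hS', Finset.ne_of_mem_erase hx]
      have e3 : S' pr = (Sf pr).erase p + T := by simp [hS']
      have e4 : (r.prems.erase pr).sum Sf + Sf pr = p ::ₘ P := by
        rw [Finset.sum_erase_add _ _ hpr]; exact hC
      have e5 : P = (r.prems.erase pr).sum Sf + (Sf pr).erase p := by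
        have := congrArg (fun m => Multiset.erase m p) e4
        simpa [Multiset.erase_add_right_pos _ hp] using this.symm
      rw [e1, e2, e3, e5]
      abel
    rwa [hsum] at hres

lemma forall₂_ref (B : MBase) (L : List ℕ) :
    List.Forall₂ (fun t p => MDer B t p) (L.map (fun p => ({p} : Multiset ℕ))) L := by
  induction L with
  | nil => simp
  | cons p L ih => exact List.Forall₂.cons (MDer.ref p) ih

lemma sum_singleton_map (L : List ℕ) :
    (L.map (fun p => ({p} : Multiset ℕ))).sum = (↑L : Multiset ℕ) := by
  induction L with
  | nil => rfl
  | cons p L ih => simp [ih, ← Multiset.cons_coe, Multiset.singleton_add]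

/-- (Atomic cut property of derivability in a base) For `P = [p₁, …, pₙ]`:
`P ⨾ S ⊢_B q` iff for every `X ⊇ B` and multisets `T₁, …, Tₙ`, if
`Tᵢ ⊢_X pᵢ` for all `i`, then `T₁ ⨾ … ⨾ Tₙ ⨾ S ⊢_X q`. -/
theorem imll_atomic_cut (B : MBase) (L : List ℕ) (S : Multiset ℕ) (q : ℕ) :
    MDer B ((↑L : Multiset ℕ) + S) q ↔
      ∀ X : MBase, B ⊆ X → ∀ T : List (Multiset ℕ),
        List.Forall₂ (fun t p => MDer X t p) T L →
        MDer X (T.sum + S) q := by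
  constructor
  · intro h X hBX T hT
    have h' : MDer X ((↑L : Multiset ℕ) + S) q := h.mono hBX
    clear h
    induction hT generalizing S with
    | nil => simpa using h'
    | @cons t p T' L' htp hT' ih =>
      have hcut := h'.cut p ((↑L' : Multiset ℕ) + S) (by rw [← Multiset.cons_coe, Multiset.cons_add]) t htp
      have := ih (S + t) (by convert hcut using 1; abel)
      simp only [List.sum_cons]
      convert this using 1
      abel
  · intro h
    have := h B (le_refl B) _ (forall₂_ref B L)
    rwa [sum_singleton_map L] at this
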